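/- arXiv:2108.00272 — 2 statements merged into one kernel-verified Lean document; each statement's English description precedes it below -/
import Mathlib

section
/- Let α > 0 and let φ_α(x) = (α/(2·√(2π)))·|x|^{α/2 − 1}·exp(−|x|^α/2) be the density of the α-normal distribution. Then ∫_ℝ ln|x|·φ_α(x) dx = −(γ + ln 2)/α, where γ is the Euler–Mascheroni constant. -/
open MeasureTheory Real Set Asymptotics Filter


lemma key_gamma_integral :
    ∫ t in Ioi (0:ℝ), Real.log t * Real.exp (-t) * t ^ ((1:ℝ)/2 - 1)
      = -Real.sqrt π * (Real.eulerMascheroniConstant + 2 * Real.log 2) := by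
  have h1 : HasDerivAt Complex.GammaIntegral
      (∫ t : ℝ in Ioi 0, (t:ℂ) ^ ((1/2:ℂ) - 1) * (Real.log t * Real.exp (-t))) (1/2) :=
    Complex.hasDerivAt_GammaIntegral (by norm_num)
  have heq : Complex.Gamma =ᶠ[nhds (1/2:ℂ)] Complex.GammaIntegral := by
    have hopen : ∀ᶠ s : ℂ in nhds (1/2:ℂ), 0 < s.re := by
      have : IsOpen {s : ℂ | 0 < s.re} := isOpen_lt continuous_const Complex.continuous_re
      exact this.eventually_mem (by norm_num)
    exact hopen.mono fun s hs => Complex.Gamma_eq_integral hs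
  have h2 : HasDerivAt Complex.Gamma
      (∫ t : ℝ in Ioi 0, (t:ℂ) ^ ((1/2:ℂ) - 1) * (Real.log t * Real.exp (-t))) (1/2) :=
    h1.congr_of_eventuallyEq heq
  have h3 := h2.unique Complex.hasDerivAt_Gamma_one_half
  have h4 : ∫ t : ℝ in Ioi 0, (t:ℂ) ^ ((1/2:ℂ) - 1) * (Real.log t * Real.exp (-t))
      = ((∫ t in Ioi (0:ℝ), Real.log t * Real.exp (-t) * t ^ ((1:ℝ)/2 - 1) : ℝ) : ℂ) := by
    refine Eq.trans ?_ (integral_ofReal (𝕜 := ℂ))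
    refine setIntegral_congr_fun measurableSet_Ioi fun t ht => ?_
    have ht0 : (0:ℝ) < t := ht
    rw [show ((1/2:ℂ) - 1) = (((1:ℝ)/2 - 1 : ℝ) : ℂ) by push_cast; ring,
      ← Complex.ofReal_cpow ht0.le]
    push_cast
    norm_cast
    congr 1
    rw [Algebra.algebraMap_self_apply]
    ring
  rw [h4] at h3
  have h5 : ((-√π * (eulerMascheroniConstant + 2 * Real.log 2) : ℝ) : ℂ)
      = -↑√π * (↑eulerMascheroniConstant + 2 * Complex.log 2) := by
    have : Complex.log 2 = ((Real.log 2 : ℝ) : ℂ) := by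
      rw [Complex.ofReal_log (by norm_num : (0:ℝ) ≤ 2)]; norm_num
    rw [this]; push_cast; ring
  exact_mod_cast h3.trans h5.symm


lemma key_integrableOn :
    IntegrableOn (fun t : ℝ => Real.log t * Real.exp (-t) * t ^ ((1:ℝ)/2 - 1)) (Ioi 0) := by
  have h := (mellin_hasDerivAt_of_isBigO_rpow (E := ℂ)
      (f := fun t : ℝ => ((Real.exp (-t) : ℝ) : ℂ)) (a := (1/2:ℂ).re + 1) (b := 0)
      (s := (1/2:ℂ)) ?_ ?_ (lt_add_one _) ?_ (by norm_num)).1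
  · rw [MellinConvergent] at h
    have h2 : IntegrableOn (fun t : ℝ =>
        ((Real.log t * Real.exp (-t) * t ^ ((1:ℝ)/2 - 1) : ℝ) : ℂ)) (Ioi 0) := by
      refine h.congr_fun (fun t ht => ?_) measurableSet_Ioi
      have ht0 : (0:ℝ) < t := ht
      beta_reduce
      rw [show ((1/2:ℂ) - 1) = (((1:ℝ)/2 - 1 : ℝ) : ℂ) by push_cast; ring,
        ← Complex.ofReal_cpow ht0.le]
      simp only [smul_eq_mul, Complex.real_smul]
      push_cast
      ring
    have h3 : IntegrableOn (fun t : ℝ => RCLike.re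
        ((Real.log t * Real.exp (-t) * t ^ ((1:ℝ)/2 - 1) : ℝ) : ℂ)) (Ioi 0) := h2.re
    exact h3.congr_fun (fun t _ => RCLike.ofReal_re _) measurableSet_Ioi
  · refine (Continuous.continuousOn ?_).locallyIntegrableOn measurableSet_Ioi
    exact Complex.continuous_ofReal.comp (Real.continuous_exp.comp continuous_neg)
  · rw [← isBigO_norm_left]
    simp_rw [Complex.norm_real, isBigO_norm_left]
    simpa only [neg_one_mul] using (isLittleO_exp_neg_mul_rpow_atTop zero_lt_one _).isBigO
  · simp_rw [neg_zero, rpow_zero]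
    refine isBigO_const_of_tendsto (?_ : Tendsto _ _ (nhds (1 : ℂ))) one_ne_zero
    rw [(by simp : (1 : ℂ) = Real.exp (-0))]
    exact (Complex.continuous_ofReal.comp (Real.continuous_exp.comp continuous_neg)).continuousWithinAt



lemma G_integral :
    ∫ y in Ioi (0:ℝ), Real.log y * Real.exp (-y/2) * y ^ ((1:ℝ)/2 - 1)
      = -Real.sqrt (2*π) * (Real.eulerMascheroniConstant + Real.log 2) := by
  have h0 := integral_comp_mul_left_Ioi
    (fun y => Real.log y * Real.exp (-y/2) * y ^ ((1:ℝ)/2 - 1)) 0 (two_pos (α := ℝ))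
  simp only [mul_zero, smul_eq_mul] at h0
  -- h0 : ∫ x in Ioi 0, f (2*x) = 2⁻¹ * ∫ y in Ioi 0, f y
  have h1 : ∫ x in Ioi (0:ℝ),
      Real.log (2*x) * Real.exp (-(2*x)/2) * (2*x) ^ ((1:ℝ)/2 - 1)
      = ∫ x in Ioi (0:ℝ), (2:ℝ) ^ ((1:ℝ)/2 - 1) *
          (Real.log 2 * (Real.exp (-x) * x ^ ((1:ℝ)/2 - 1))
            + Real.log x * Real.exp (-x) * x ^ ((1:ℝ)/2 - 1)) := by
    refine setIntegral_congr_fun measurableSet_Ioi fun x hx => ?_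
    have hx0 : (0:ℝ) < x := hx
    rw [Real.log_mul two_ne_zero hx0.ne', Real.mul_rpow (by norm_num) hx0.le]
    have : -(2*x)/2 = -x := by ring
    rw [this]
    ring
  have hF : IntegrableOn (fun x : ℝ => Real.exp (-x) * x ^ ((1:ℝ)/2 - 1)) (Ioi 0) := by
    have := Real.GammaIntegral_convergent (s := 1/2) (by norm_num)
    simpa using this
  have h2 : ∫ x in Ioi (0:ℝ),
      (Real.log 2 * (Real.exp (-x) * x ^ ((1:ℝ)/2 - 1))
        + Real.log x * Real.exp (-x) * x ^ ((1:ℝ)/2 - 1))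
      = Real.log 2 * Real.sqrt π
        + (-Real.sqrt π * (Real.eulerMascheroniConstant + 2 * Real.log 2)) := by
    rw [integral_add (hF.const_mul _) key_integrableOn, integral_const_mul,
      key_gamma_integral]
    congr 1
    rw [show Real.sqrt π = Real.Gamma (1/2) from Real.Gamma_one_half_eq.symm,
      Real.Gamma_eq_integral (by norm_num : (0:ℝ) < 1/2)]
  rw [integral_const_mul, h2] at h1
  rw [h1] at h0
  have hc : (2:ℝ) ^ ((1:ℝ)/2 - 1) = Real.sqrt 2 / 2 := by
    rw [show (1:ℝ)/2 - 1 = -(1/2) by ring, Real.rpow_neg (by norm_num),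
      ← Real.sqrt_eq_rpow]
    rw [inv_eq_one_div, eq_div_iff (by norm_num : (2:ℝ) ≠ 0)]
    rw [← Real.sqrt_mul_self (by norm_num : (0:ℝ) ≤ 2)]
    field_simp [Real.sqrt_ne_zero']
    rw [Real.sq_sqrt (Real.sqrt_nonneg _)]
  have hsqrt : Real.sqrt (2*π) = Real.sqrt 2 * Real.sqrt π :=
    Real.sqrt_mul (by norm_num) π
  have h2' : Real.sqrt 2 * Real.sqrt 2 = 2 := Real.mul_self_sqrt (by norm_num)
  -- h0 : ∫ f(2x) = 2⁻¹ * ∫ f ; so ∫ f = 2 * LHS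
  have : ∫ y in Ioi (0:ℝ), Real.log y * Real.exp (-y/2) * y ^ ((1:ℝ)/2 - 1)
      = 2 * ((2:ℝ) ^ ((1:ℝ)/2 - 1) * (Real.log 2 * Real.sqrt π
        + (-Real.sqrt π * (Real.eulerMascheroniConstant + 2 * Real.log 2)))) := by
    linarith [h0]
  rw [this, hc, hsqrt]
  nlinarith [h2']



/-- The α-normal density `φ_α(x) = (α/(2√(2π)))·|x|^{α/2−1}·exp(−|x|^α/2)`. -/
noncomputable def alphaNormalPDF (α : ℝ) (x : ℝ) : ℝ :=
  α / (2 * Real.sqrt (2 * Real.pi)) * |x| ^ (α / 2 - 1) * Real.exp (-|x| ^ α / 2)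

/-- `∫_ℝ ln|x|·φ_α(x) dx = −(γ + ln 2)/α`, with `γ` the Euler–Mascheroni
constant. -/
theorem alphaNormal_log_moment (α : ℝ) (hα : 0 < α) :
    ∫ x, Real.log |x| * alphaNormalPDF α x
      = -(Real.eulerMascheroniConstant + Real.log 2) / α := by
  have hc : (0:ℝ) < Real.sqrt (2*π) := Real.sqrt_pos.mpr (by positivity)
  have e1 : (fun x : ℝ => Real.log |x| * alphaNormalPDF α x)
      = fun x => (fun t => Real.log t * alphaNormalPDF α t) |x| := by
    funext x
    simp only [alphaNormalPDF, abs_abs]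
  rw [show (∫ x, Real.log |x| * alphaNormalPDF α x)
      = ∫ x, (fun t => Real.log t * alphaNormalPDF α t) |x| by rw [← e1],
    integral_comp_abs (f := fun t => Real.log t * alphaNormalPDF α t)]
  -- reduce to the G integral via x ↦ x^α
  have key : ∫ y in Ioi (0:ℝ), Real.log y * Real.exp (-y/2) * y ^ ((1:ℝ)/2 - 1)
      = (α * Real.sqrt (2*π) * 2) * ∫ x in Ioi 0, Real.log x * alphaNormalPDF α x := by
    rw [← integral_comp_rpow_Ioi
      (fun y => Real.log y * Real.exp (-y/2) * y ^ ((1:ℝ)/2 - 1)) hα.ne',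
      ← integral_const_mul]
    refine setIntegral_congr_fun measurableSet_Ioi fun x hx => ?_
    have hx0 : (0:ℝ) < x := hx
    have hre : x ^ (α-1) * x ^ (α*((1:ℝ)/2-1)) = x ^ (α/2 - 1) := by
      rw [← Real.rpow_add hx0]
      congr 1
      ring
    simp only [smul_eq_mul]
    rw [Real.log_rpow hx0, ← Real.rpow_mul hx0.le, abs_of_pos hα]
    unfold alphaNormalPDF
    rw [abs_of_pos hx0]
    rw [← hre]
    field_simp
  rw [G_integral] at key
  -- key : -√(2π)(γ+log2) = (α √(2π) 2) * I ; goal : 2 * I = -(γ+log2)/α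
  have hαne : α ≠ 0 := hα.ne'
  field_simp
  nlinarith [key, hc]
end

section
/- Let α > 0 and let φ_α(x) = (α/(2·√(2π)))·|x|^{α/2 − 1}·exp(−|x|^α/2) be the density of the α-normal distribution. The differential entropy h(G_α) := −∫_ℝ φ_α(x)·ln(φ_α(x)) dx equals (1/2 − 1/α)·(γ + ln 2) + ln(2·√(2π)/α) + 1/2, where γ is the Euler–Mascheroni constant. In particular, for α = 2 this equals ln √(2π) + 1/2. -/
open MeasureTheory Real Set

lemma entJ2 :
    ∫ t in Set.Ioi (0:ℝ), t ^ (-(1/2) : ℝ) * (Real.log t * Real.exp (-t))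
      = -Real.sqrt Real.pi * (Real.eulerMascheroniConstant + 2 * Real.log 2) := by
  have h1 := Complex.hasDerivAt_GammaIntegral (s := 1/2) (by norm_num)
  have heq : Complex.GammaIntegral =ᶠ[nhds (1/2 : ℂ)] Complex.Gamma := by
    have hopen : IsOpen {s : ℂ | 0 < s.re} := isOpen_lt continuous_const Complex.continuous_re
    filter_upwards [hopen.mem_nhds (by norm_num)] with s hs
    exact (Complex.Gamma_eq_integral hs).symm
  have h1' : HasDerivAt Complex.Gamma
      (∫ t : ℝ in Ioi 0, (t:ℂ) ^ ((1/2:ℂ) - 1) * (Real.log t * Real.exp (-t))) (1/2) :=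
    h1.congr_of_eventuallyEq heq.symm
  have h2 := Complex.hasDerivAt_Gamma_one_half
  have hI := h2.unique h1'
  rw [show ∫ t : ℝ in Ioi 0, (t:ℂ) ^ ((1/2:ℂ) - 1) * (Real.log t * Real.exp (-t))
      = ((∫ t in Set.Ioi (0:ℝ), t ^ (-(1/2) : ℝ) * (Real.log t * Real.exp (-t)) : ℝ) : ℂ)
      from ?_] at hI
  · exact_mod_cast hI.symm
  · refine Eq.trans ?_ (integral_ofReal (𝕜 := ℂ))
    refine setIntegral_congr_fun measurableSet_Ioi (fun t ht => ?_)
    have ht' : (0:ℝ) ≤ t := le_of_lt ht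
    rw [show ((1/2:ℂ) - 1) = ((-(1/2) : ℝ) : ℂ) by norm_num]
    rw [← Complex.ofReal_cpow ht']
    norm_cast

open Asymptotics Filter in
lemma entJ2int :
    IntegrableOn (fun t : ℝ => t ^ (-(1/2):ℝ) * (Real.log t * Real.exp (-t))) (Ioi 0) := by
  have h := (mellin_hasDerivAt_of_isBigO_rpow (E := ℂ)
      (f := fun x : ℝ => ((Real.exp (-x) : ℝ) : ℂ)) (a := 1) (b := 0) (s := 1/2)
      ?_ ?_ (by norm_num) ?_ (by norm_num)).1
  · have h' : IntegrableOn (fun t : ℝ =>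
        ((t ^ (-(1/2):ℝ) * (Real.log t * Real.exp (-t)) : ℝ) : ℂ)) (Ioi 0) := by
      refine h.congr_fun (fun t ht => ?_) measurableSet_Ioi
      have ht' : (0:ℝ) ≤ t := le_of_lt ht
      beta_reduce
      rw [show ((1/2:ℂ) - 1) = ((-(1/2) : ℝ) : ℂ) by norm_num, ← Complex.ofReal_cpow ht']
      simp only [Complex.real_smul, ← Complex.ofReal_mul]
      norm_cast
      rw [Complex.real_smul]
      norm_cast
    rw [IntegrableOn]
    simpa [← Complex.ofReal_exp] using h'.re
  · refine (Continuous.continuousOn ?_).locallyIntegrableOn measurableSet_Ioi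
    exact Complex.continuous_ofReal.comp (Real.continuous_exp.comp continuous_neg)
  · rw [← isBigO_norm_left]
    simp_rw [Complex.norm_real, isBigO_norm_left]
    simpa only [neg_one_mul] using (isLittleO_exp_neg_mul_rpow_atTop zero_lt_one _).isBigO
  · simp_rw [neg_zero, Real.rpow_zero]
    refine isBigO_const_of_tendsto (?_ : Tendsto _ _ (nhds (1 : ℂ))) one_ne_zero
    rw [(by simp : (1 : ℂ) = Real.exp (-0))]
    exact (Complex.continuous_ofReal.comp
      (Real.continuous_exp.comp continuous_neg)).continuousWithinAt

lemma entJ0 : ∫ u in Set.Ioi (0:ℝ), u ^ (-(1/2):ℝ) * Real.exp (-u) = Real.sqrt Real.pi := by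
  rw [← Real.Gamma_one_half_eq, Real.Gamma_eq_integral (by norm_num : (0:ℝ) < 1/2)]
  refine setIntegral_congr_fun measurableSet_Ioi (fun u hu => ?_)
  rw [show (1/2 : ℝ) - 1 = -(1/2) by norm_num]
  ring

lemma entJ1 : ∫ u in Set.Ioi (0:ℝ), u ^ ((1/2):ℝ) * Real.exp (-u) = Real.sqrt Real.pi / 2 := by
  have h := Real.Gamma_eq_integral (by norm_num : (0:ℝ) < 3/2)
  have h2 : Real.Gamma (3/2) = Real.sqrt Real.pi / 2 := by
    rw [show (3/2 : ℝ) = 1/2 + 1 by norm_num, Real.Gamma_add_one (by norm_num),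
      Real.Gamma_one_half_eq]
    ring
  rw [← h2, h]
  refine setIntegral_congr_fun measurableSet_Ioi (fun u hu => ?_)
  rw [show (3/2 : ℝ) - 1 = 1/2 by norm_num]
  ring

lemma entI0 : IntegrableOn (fun u : ℝ => u ^ (-(1/2):ℝ) * Real.exp (-u)) (Ioi 0) := by
  have := Real.GammaIntegral_convergent (by norm_num : (0:ℝ) < 1/2)
  refine this.congr_fun (fun u hu => ?_) measurableSet_Ioi
  rw [show (1/2 : ℝ) - 1 = -(1/2) by norm_num]
  ring

lemma entI1 : IntegrableOn (fun u : ℝ => u ^ ((1/2):ℝ) * Real.exp (-u)) (Ioi 0) := by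
  have := Real.GammaIntegral_convergent (by norm_num : (0:ℝ) < 3/2)
  refine this.congr_fun (fun u hu => ?_) measurableSet_Ioi
  rw [show (3/2 : ℝ) - 1 = 1/2 by norm_num]
  ring

lemma entLval (A C : ℝ) :
    ∫ u in Set.Ioi (0:ℝ), u ^ (-(1/2):ℝ) * Real.exp (-u) * (A + C * Real.log u - u)
      = (A - C * (Real.eulerMascheroniConstant + 2 * Real.log 2) - 1/2) * Real.sqrt Real.pi := by
  have step : ∀ u ∈ Set.Ioi (0:ℝ),
      u ^ (-(1/2):ℝ) * Real.exp (-u) * (A + C * Real.log u - u)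
        = A * (u ^ (-(1/2):ℝ) * Real.exp (-u))
          + C * (u ^ (-(1/2):ℝ) * (Real.log u * Real.exp (-u)))
          - u ^ ((1/2):ℝ) * Real.exp (-u) := by
    intro u hu
    have hu' : (0:ℝ) < u := hu
    have hpow : u ^ (-(1/2):ℝ) * u = u ^ ((1/2):ℝ) := by
      nth_rewrite 2 [← Real.rpow_one u]
      rw [← Real.rpow_add hu']
      norm_num
    calc u ^ (-(1/2):ℝ) * Real.exp (-u) * (A + C * Real.log u - u)
        = A * (u ^ (-(1/2):ℝ) * Real.exp (-u))
          + C * (u ^ (-(1/2):ℝ) * (Real.log u * Real.exp (-u)))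
          - (u ^ (-(1/2):ℝ) * u) * Real.exp (-u) := by ring
      _ = _ := by rw [hpow]
  rw [setIntegral_congr_fun measurableSet_Ioi step]
  have ha : IntegrableOn (fun u : ℝ => A * (u ^ (-(1/2):ℝ) * Real.exp (-u))) (Ioi 0) :=
    entI0.const_mul A
  have hb : IntegrableOn
      (fun u : ℝ => C * (u ^ (-(1/2):ℝ) * (Real.log u * Real.exp (-u)))) (Ioi 0) :=
    entJ2int.const_mul C
  have hab : IntegrableOn (fun u : ℝ => A * (u ^ (-(1/2):ℝ) * Real.exp (-u))
      + C * (u ^ (-(1/2):ℝ) * (Real.log u * Real.exp (-u)))) (Ioi 0) := ha.add hb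
  rw [integral_sub hab entI1, integral_add ha hb,
    integral_const_mul, integral_const_mul, entJ0, entJ1, entJ2]
  ring

lemma entPointwise (α : ℝ) (hα : 0 < α) : ∀ u ∈ Set.Ioi (0:ℝ),
    (|1/α| * (2*u) ^ (1/α - 1))
        • (alphaNormalPDF α ((2*u) ^ (1/α)) * Real.log (alphaNormalPDF α ((2*u) ^ (1/α))))
      = (α / (2 * Real.sqrt (2*Real.pi)) / α * 2 ^ (-(1/2):ℝ)) *
        (u ^ (-(1/2):ℝ) * Real.exp (-u) *
          ((Real.log (α / (2 * Real.sqrt (2*Real.pi))) + (α/2-1)/α * Real.log 2)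
            + ((α/2-1)/α) * Real.log u - u)) := by
  intro u hu
  have hα' : α ≠ 0 := hα.ne'
  have hu' : (0:ℝ) < u := hu
  have h2u : (0:ℝ) < 2*u := by linarith
  have hc : (0:ℝ) < α / (2 * Real.sqrt (2*Real.pi)) := by positivity
  have ht : (0:ℝ) < (2*u)^(1/α) := Real.rpow_pos_of_pos h2u _
  simp only [alphaNormalPDF, abs_of_pos ht, smul_eq_mul]
  rw [← Real.rpow_mul h2u.le, ← Real.rpow_mul h2u.le, one_div_mul_cancel hα',
    Real.rpow_one,
    show -(2*u)/2 = -u by ring,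
    Real.log_mul (by positivity) (Real.exp_ne_zero _),
    Real.log_mul hc.ne' (Real.rpow_pos_of_pos h2u _).ne',
    Real.log_exp, Real.log_rpow h2u, Real.log_mul two_ne_zero hu'.ne',
    abs_of_pos (by positivity : (0:ℝ) < 1/α)]
  have hpow : (2*u) ^ ((1/α - 1):ℝ) * (2*u) ^ ((1/α*(α/2-1)):ℝ)
      = 2 ^ (-(1/2):ℝ) * u ^ (-(1/2):ℝ) := by
    rw [← Real.rpow_add h2u, show 1/α - 1 + 1/α*(α/2-1) = -(1/2) by field_simp; ring,
      Real.mul_rpow (by norm_num) hu'.le]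
  linear_combination (1 / α * (α / (2 * Real.sqrt (2 * Real.pi))) * Real.exp (-u) *
    (Real.log (α / (2 * Real.sqrt (2 * Real.pi)))
      + 1 / α * (α / 2 - 1) * (Real.log 2 + Real.log u) + -u)) * hpow

/-- the differential entropy `h(G_α) = −∫ φ_α ln φ_α` equals
`(1/2 − 1/α)(γ + ln 2) + ln(2√(2π)/α) + 1/2`; in particular for `α = 2` it equals
`ln √(2π) + 1/2`. -/
theorem alphaNormal_entropy (α : ℝ) (hα : 0 < α) :
    (-∫ x, alphaNormalPDF α x * Real.log (alphaNormalPDF α x)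
        = (1 / 2 - 1 / α) * (Real.eulerMascheroniConstant + Real.log 2)
          + Real.log (2 * Real.sqrt (2 * Real.pi) / α) + 1 / 2) ∧
    (α = 2 →
      -∫ x, alphaNormalPDF α x * Real.log (alphaNormalPDF α x)
        = Real.log (Real.sqrt (2 * Real.pi)) + 1 / 2) := by
  have hα' : α ≠ 0 := hα.ne'
  have hπ : (0:ℝ) < Real.pi := Real.pi_pos
  have hS : (0:ℝ) < Real.sqrt (2 * Real.pi) := Real.sqrt_pos.mpr (by positivity)
  set g : ℝ → ℝ := fun t => alphaNormalPDF α t * Real.log (alphaNormalPDF α t) with hgdef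
  have step1 : ∫ x, g x = 2 * ∫ t in Ioi 0, g t := by
    have habs : (fun x : ℝ => g |x|) = g := by
      funext x
      simp only [hgdef, alphaNormalPDF, abs_abs]
    conv_lhs => rw [← habs]
    exact integral_comp_abs
  have step2 : ∫ t in Ioi 0, g t
      = ∫ y in Ioi 0, (|1/α| * y ^ (1/α - 1)) • g (y ^ (1/α)) :=
    (integral_comp_rpow_Ioi g (one_div_ne_zero hα')).symm
  have step3 : ∫ y in Ioi 0, (|1/α| * y ^ (1/α - 1)) • g (y ^ (1/α))
      = 2 * ∫ u in Ioi 0, (|1/α| * (2*u) ^ (1/α - 1)) • g ((2*u) ^ (1/α)) := by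
    have h := integral_comp_mul_left_Ioi
      (fun y => (|1/α| * y ^ (1/α - 1)) • g (y ^ (1/α))) 0 (two_pos)
    rw [mul_zero] at h
    rw [h, smul_eq_mul]
    ring
  have step4 : ∫ u in Ioi 0, (|1/α| * (2*u) ^ (1/α - 1)) • g ((2*u) ^ (1/α))
      = (α / (2 * Real.sqrt (2*Real.pi)) / α * 2 ^ (-(1/2):ℝ)) *
        (((Real.log (α / (2 * Real.sqrt (2*Real.pi))) + (α/2-1)/α * Real.log 2)
            - ((α/2-1)/α) * (Real.eulerMascheroniConstant + 2 * Real.log 2) - 1/2)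
          * Real.sqrt Real.pi) := by
    rw [setIntegral_congr_fun measurableSet_Ioi (entPointwise α hα), integral_const_mul,
      entLval]
  have h2half : (2:ℝ) ^ (-(1/2):ℝ) = (Real.sqrt 2)⁻¹ := by
    rw [Real.rpow_neg (by norm_num : (0:ℝ) ≤ 2)]
    congr 1
    exact (Real.sqrt_eq_rpow 2).symm
  have hss : Real.sqrt 2 * Real.sqrt 2 = 2 := Real.mul_self_sqrt (by norm_num)
  have hsπ : (0:ℝ) < Real.sqrt Real.pi := Real.sqrt_pos.mpr hπ
  have hs2 : (0:ℝ) < Real.sqrt 2 := Real.sqrt_pos.mpr (by norm_num)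
  have hEπ : (α / (2 * Real.sqrt (2*Real.pi)) / α * 2 ^ (-(1/2):ℝ)) * Real.sqrt Real.pi
      = 1/4 := by
    rw [h2half, Real.sqrt_mul (by norm_num : (0:ℝ) ≤ 2) Real.pi,
      div_right_comm, div_self hα', one_div]
    have key : (2*(Real.sqrt 2 * Real.sqrt Real.pi)) * Real.sqrt 2 = 4 * Real.sqrt Real.pi := by
      linear_combination 2 * Real.sqrt Real.pi * hss
    rw [← mul_inv, key, mul_inv, mul_assoc, inv_mul_cancel₀ hsπ.ne', mul_one]
    norm_num
  have total : ∫ x, g x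
      = (Real.log (α / (2 * Real.sqrt (2*Real.pi))) + (α/2-1)/α * Real.log 2)
        - ((α/2-1)/α) * (Real.eulerMascheroniConstant + 2 * Real.log 2) - 1/2 := by
    rw [step1, step2, step3, step4]
    linear_combination (4 * ((Real.log (α / (2 * Real.sqrt (2*Real.pi)))
      + (α/2-1)/α * Real.log 2)
      - ((α/2-1)/α) * (Real.eulerMascheroniConstant + 2 * Real.log 2) - 1/2)) * hEπ
  have hlogc : Real.log (α / (2 * Real.sqrt (2*Real.pi)))
      = -Real.log (2 * Real.sqrt (2*Real.pi) / α) := by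
    rw [← Real.log_inv, inv_div]
  have hC : (α/2-1)/α = 1/2 - 1/α := by
    field_simp
  have h1 : -∫ x, alphaNormalPDF α x * Real.log (alphaNormalPDF α x)
      = (1 / 2 - 1 / α) * (Real.eulerMascheroniConstant + Real.log 2)
        + Real.log (2 * Real.sqrt (2 * Real.pi) / α) + 1 / 2 := by
    rw [show (∫ x, alphaNormalPDF α x * Real.log (alphaNormalPDF α x)) = ∫ x, g x from rfl,
      total, hlogc, hC]
    ring
  refine ⟨h1, fun h2 => ?_⟩
  rw [h1, h2]
  rw [show (2 * Real.sqrt (2 * Real.pi) / 2 : ℝ) = Real.sqrt (2 * Real.pi) by ring]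
  norm_num
end
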